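/- For every integer n ≥ 1, the number of permutations π of the box {0,…,n−1}² ⊆ ℤ² such that π(x) − x ∈ {(1,0),(−1,0),(0,1),(0,−1)} for all x in the box equals the square of the number of perfect matchings of the n×n grid graph, i.e., the simple graph on {0,…,n−1}² in which x is adjacent to y if and only if |x₁ − y₁| + |x₂ − y₂| = 1. -/
import Mathlib


/-- A perfect matching of a simple undirected graph: a set of edges of the graph
such that every vertex belongs to exactly one edge of the set. -/
def IsPerfectMatching {W : Type*} (G : SimpleGraph W) (M : Set (Sym2 W)) : Prop :=
  M ⊆ G.edgeSet ∧ ∀ v : W, ∃! e, e ∈ M ∧ v ∈ e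

/-- The restricting set `A_+ = {(1,0),(−1,0),(0,1),(0,−1)} ⊆ ℤ²`. -/
def A_plus : Set (ℤ × ℤ) := {(1, 0), (-1, 0), (0, 1), (0, -1)}

/-- The box `{0,…,n₁−1} × {0,…,n₂−1} ⊆ ℤ²`. -/
def box2 (n₁ n₂ : ℕ) : Set (ℤ × ℤ) :=
  {x | 0 ≤ x.1 ∧ x.1 < (n₁ : ℤ) ∧ 0 ≤ x.2 ∧ x.2 < (n₂ : ℤ)}

/-- `Π(n)`: the number of permutations `π` of the box `{0,…,n−1}²` with
`π x − x ∈ A_+` for all `x` in the box. -/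
noncomputable def Piplus (n : ℕ) : ℕ :=
  Set.ncard {g : Equiv.Perm ↥(box2 n n) |
    ∀ x : ↥(box2 n n), (g x).val - x.val ∈ A_plus}

/-! ### Auxiliary material -/

lemma mem_A_plus_iff (a b : ℤ) : (a, b) ∈ A_plus ↔ |a| + |b| = 1 := by
  simp only [A_plus, Set.mem_insert_iff, Set.mem_singleton_iff, Prod.mk.injEq]
  rw [Int.abs_eq_natAbs, Int.abs_eq_natAbs]
  omega

lemma box2_finite (n₁ n₂ : ℕ) : (box2 n₁ n₂).Finite := by
  have h : box2 n₁ n₂ ⊆ (Set.Ico (0:ℤ) n₁) ×ˢ (Set.Ico (0:ℤ) n₂) := by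
    rintro ⟨a, b⟩ ⟨h1, h2, h3, h4⟩
    exact ⟨⟨h1, h2⟩, ⟨h3, h4⟩⟩
  exact ((Set.finite_Ico _ _).prod (Set.finite_Ico _ _)).subset h

instance box2Finite (n : ℕ) : Finite ↥(box2 n n) := (box2_finite n n).to_subtype

section PM

variable {W : Type*} {G : SimpleGraph W} {M : Set (Sym2 W)}

/-- The partner of a vertex in a perfect matching. -/
noncomputable def pmPartner (hM : IsPerfectMatching G M) (v : W) : W :=
  Sym2.Mem.other (hM.2 v).choose_spec.1.2

lemma pmPartner_edge_eq (hM : IsPerfectMatching G M) (v : W) :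
    s(v, pmPartner hM v) = (hM.2 v).choose :=
  Sym2.other_spec (hM.2 v).choose_spec.1.2

lemma pmPartner_edge_mem (hM : IsPerfectMatching G M) (v : W) :
    s(v, pmPartner hM v) ∈ M := by
  rw [pmPartner_edge_eq]; exact (hM.2 v).choose_spec.1.1

lemma pm_edge_unique (hM : IsPerfectMatching G M) (v : W) {e : Sym2 W}
    (he : e ∈ M) (hv : v ∈ e) : e = s(v, pmPartner hM v) := by
  rw [pmPartner_edge_eq]
  exact (hM.2 v).choose_spec.2 e ⟨he, hv⟩

lemma pmPartner_eq_of_mem (hM : IsPerfectMatching G M) {u v : W}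
    (h : s(u, v) ∈ M) : pmPartner hM u = v := by
  have h2 := pm_edge_unique hM u h (by simp)
  exact (Sym2.congr_right.mp h2).symm

lemma pmPartner_adj (hM : IsPerfectMatching G M) (v : W) :
    G.Adj v (pmPartner hM v) :=
  (SimpleGraph.mem_edgeSet G).mp (hM.1 (pmPartner_edge_mem hM v))

end PM

section Grid

variable {n : ℕ} {G : SimpleGraph ↥(box2 n n)}
variable (hG : ∀ x y : ↥(box2 n n), G.Adj x y ↔
      |x.val.1 - y.val.1| + |x.val.2 - y.val.2| = 1)

/-- The coloring of the grid. -/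
def gBlack (x : ↥(box2 n n)) : Prop := (x.val.1 + x.val.2) % 2 = 0

instance (x : ↥(box2 n n)) : Decidable (gBlack x) := by
  unfold gBlack; infer_instance

include hG in
lemma adj_flip {x y : ↥(box2 n n)} (h : G.Adj x y) : (gBlack x ↔ ¬ gBlack y) := by
  rw [hG] at h
  rw [Int.abs_eq_natAbs, Int.abs_eq_natAbs] at h
  unfold gBlack
  omega

include hG in
lemma adj_of_Aplus {g : Equiv.Perm ↥(box2 n n)}
    (hg : ∀ x : ↥(box2 n n), ((g x).val - x.val ∈ A_plus)) (x : ↥(box2 n n)) :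
    G.Adj x (g x) := by
  have h := hg x
  rw [show (g x).val - x.val = ((g x).val.1 - x.val.1, (g x).val.2 - x.val.2) from rfl,
    mem_A_plus_iff] at h
  rw [hG, abs_sub_comm x.val.1, abs_sub_comm x.val.2]
  exact h

/-- The matching associated to a restricted permutation and a color class. -/
def msetOf (g : Equiv.Perm ↥(box2 n n)) (c : ↥(box2 n n) → Prop) :
    Set (Sym2 ↥(box2 n n)) :=
  {e | ∃ x, c x ∧ e = s(x, g x)}

include hG in
lemma msetOf_isPM {g : Equiv.Perm ↥(box2 n n)}
    (hg : ∀ x : ↥(box2 n n), ((g x).val - x.val ∈ A_plus))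
    (c : ↥(box2 n n) → Prop) (hc : ∀ x, c (g x) ↔ ¬ c x) :
    IsPerfectMatching G (msetOf g c) := by
  constructor
  · rintro e ⟨x, hx, rfl⟩
    exact (SimpleGraph.mem_edgeSet G).mpr (adj_of_Aplus hG hg x)
  · intro v
    by_cases hv : c v
    · refine ⟨s(v, g v), ⟨⟨v, hv, rfl⟩, by simp⟩, ?_⟩
      rintro e ⟨⟨x, hx, rfl⟩, hve⟩
      rcases Sym2.mem_iff.mp hve with rfl | rfl
      · rfl
      · exact absurd hx (by simpa [hv] using (hc x))
    · refine ⟨s(g.symm v, g (g.symm v)), ⟨⟨g.symm v, ?_, rfl⟩, by simp⟩, ?_⟩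
      · have h2 := hc (g.symm v)
        rw [Equiv.apply_symm_apply] at h2
        tauto
      · rintro e ⟨⟨x, hx, rfl⟩, hve⟩
        rcases Sym2.mem_iff.mp hve with rfl | rfl
        · exact absurd hx hv
        · rw [Equiv.symm_apply_apply]

include hG in
lemma Aplus_of_adj {x y : ↥(box2 n n)} (h : G.Adj x y) : y.val - x.val ∈ A_plus := by
  rw [hG] at h
  rw [show y.val - x.val = (y.val.1 - x.val.1, y.val.2 - x.val.2) from rfl, mem_A_plus_iff,
    abs_sub_comm y.val.1, abs_sub_comm y.val.2]
  exact h

/-- The permutation built from a pair of perfect matchings. -/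
noncomputable def permFun {M₁ M₂ : Set (Sym2 ↥(box2 n n))}
    (h₁ : IsPerfectMatching G M₁) (h₂ : IsPerfectMatching G M₂) (v : ↥(box2 n n)) :
    ↥(box2 n n) :=
  if gBlack v then pmPartner h₁ v else pmPartner h₂ v

include hG in
lemma permFun_inj {M₁ M₂ : Set (Sym2 ↥(box2 n n))}
    (h₁ : IsPerfectMatching G M₁) (h₂ : IsPerfectMatching G M₂) :
    Function.Injective (permFun h₁ h₂) := by
  have key : ∀ {M : Set (Sym2 ↥(box2 n n))} (hM : IsPerfectMatching G M)
      (v₁ v₂ : ↥(box2 n n)), pmPartner hM v₁ = pmPartner hM v₂ → v₁ = v₂ := by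
    intro M hM v₁ v₂ h
    have e1 := pmPartner_edge_mem hM v₁
    have e2 := pmPartner_edge_mem hM v₂
    rw [h] at e1
    have u1 := pm_edge_unique hM (pmPartner hM v₂) e1 (by simp)
    have u2 := pm_edge_unique hM (pmPartner hM v₂) e2 (by simp)
    exact Sym2.congr_left.mp (u1.trans u2.symm)
  intro v₁ v₂ h
  by_cases hb1 : gBlack v₁ <;> by_cases hb2 : gBlack v₂
  · rw [permFun, permFun, if_pos hb1, if_pos hb2] at h
    exact key h₁ v₁ v₂ h
  · rw [permFun, permFun, if_pos hb1, if_neg hb2] at h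
    have f1 := adj_flip hG (pmPartner_adj h₁ v₁)
    have f2 := adj_flip hG (pmPartner_adj h₂ v₂)
    rw [h] at f1
    tauto
  · rw [permFun, permFun, if_neg hb1, if_pos hb2] at h
    have f1 := adj_flip hG (pmPartner_adj h₂ v₁)
    have f2 := adj_flip hG (pmPartner_adj h₁ v₂)
    rw [h] at f1
    tauto
  · rw [permFun, permFun, if_neg hb1, if_neg hb2] at h
    exact key h₂ v₁ v₂ h

/-- The permutation built from a pair of perfect matchings, as an equiv. -/
noncomputable def permOf {M₁ M₂ : Set (Sym2 ↥(box2 n n))}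
    (h₁ : IsPerfectMatching G M₁) (h₂ : IsPerfectMatching G M₂) :
    Equiv.Perm ↥(box2 n n) :=
  Equiv.ofBijective _ (Finite.injective_iff_bijective.mp (permFun_inj hG h₁ h₂))

lemma permOf_apply {M₁ M₂ : Set (Sym2 ↥(box2 n n))}
    (h₁ : IsPerfectMatching G M₁) (h₂ : IsPerfectMatching G M₂) (v : ↥(box2 n n)) :
    permOf hG h₁ h₂ v = permFun h₁ h₂ v := rfl

include hG in
lemma permOf_adj {M₁ M₂ : Set (Sym2 ↥(box2 n n))}
    (h₁ : IsPerfectMatching G M₁) (h₂ : IsPerfectMatching G M₂) (v : ↥(box2 n n)) :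
    G.Adj v (permOf hG h₁ h₂ v) := by
  rw [permOf_apply, permFun]
  by_cases hb : gBlack v
  · rw [if_pos hb]; exact pmPartner_adj h₁ v
  · rw [if_neg hb]; exact pmPartner_adj h₂ v

include hG in
lemma permOf_restricted {M₁ M₂ : Set (Sym2 ↥(box2 n n))}
    (h₁ : IsPerfectMatching G M₁) (h₂ : IsPerfectMatching G M₂) :
    ∀ x : ↥(box2 n n), ((permOf hG h₁ h₂) x).val - x.val ∈ A_plus :=
  fun x => Aplus_of_adj hG (permOf_adj hG h₁ h₂ x)

include hG in
lemma flip_black {g : Equiv.Perm ↥(box2 n n)}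
    (hg : ∀ x : ↥(box2 n n), ((g x).val - x.val ∈ A_plus)) (x : ↥(box2 n n)) :
    gBlack (g x) ↔ ¬ gBlack x := by
  have := adj_flip hG (adj_of_Aplus hG hg x)
  tauto

include hG in
lemma permFun_msetOf {g : Equiv.Perm ↥(box2 n n)}
    (hg : ∀ x : ↥(box2 n n), ((g x).val - x.val ∈ A_plus))
    (h₁ : IsPerfectMatching G (msetOf g gBlack))
    (h₂ : IsPerfectMatching G (msetOf g (fun x => ¬ gBlack x))) (v : ↥(box2 n n)) :
    permFun h₁ h₂ v = g v := by
  by_cases hb : gBlack v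
  · rw [permFun, if_pos hb]
    exact pmPartner_eq_of_mem h₁ ⟨v, hb, rfl⟩
  · rw [permFun, if_neg hb]
    exact pmPartner_eq_of_mem h₂ ⟨v, hb, rfl⟩

include hG in
lemma msetOf_permOf {M₁ M₂ : Set (Sym2 ↥(box2 n n))}
    (h₁ : IsPerfectMatching G M₁) (h₂ : IsPerfectMatching G M₂) :
    msetOf (permOf hG h₁ h₂) gBlack = M₁ ∧
      msetOf (permOf hG h₁ h₂) (fun x => ¬ gBlack x) = M₂ := by
  constructor
  · apply Set.eq_of_subset_of_subset
    · rintro e ⟨x, hx, rfl⟩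
      rw [permOf_apply, permFun, if_pos hx]
      exact pmPartner_edge_mem h₁ x
    · intro e he
      induction e using Sym2.ind with
      | _ a b =>
        have hadj : G.Adj a b := (SimpleGraph.mem_edgeSet G).mp (h₁.1 he)
        have hflip := adj_flip hG hadj
        by_cases ha : gBlack a
        · refine ⟨a, ha, ?_⟩
          rw [permOf_apply, permFun, if_pos ha, pmPartner_eq_of_mem h₁ he]
        · have hb : gBlack b := by tauto
          refine ⟨b, hb, ?_⟩
          rw [permOf_apply, permFun, if_pos hb,
            pmPartner_eq_of_mem h₁ (Sym2.eq_swap ▸ he), Sym2.eq_swap]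
  · apply Set.eq_of_subset_of_subset
    · rintro e ⟨x, hx, rfl⟩
      rw [permOf_apply, permFun, if_neg hx]
      exact pmPartner_edge_mem h₂ x
    · intro e he
      induction e using Sym2.ind with
      | _ a b =>
        have hadj : G.Adj a b := (SimpleGraph.mem_edgeSet G).mp (h₂.1 he)
        have hflip := adj_flip hG hadj
        by_cases ha : gBlack a
        · have hb : ¬ gBlack b := by tauto
          refine ⟨b, hb, ?_⟩
          rw [permOf_apply, permFun, if_neg hb,
            pmPartner_eq_of_mem h₂ (Sym2.eq_swap ▸ he), Sym2.eq_swap]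
        · refine ⟨a, ha, ?_⟩
          rw [permOf_apply, permFun, if_neg ha, pmPartner_eq_of_mem h₂ he]

/-- The key bijection. -/
noncomputable def gridEquiv :
    {g : Equiv.Perm ↥(box2 n n) | ∀ x : ↥(box2 n n), (g x).val - x.val ∈ A_plus} ≃
    ({M : Set (Sym2 ↥(box2 n n)) | IsPerfectMatching G M} ×
      {M : Set (Sym2 ↥(box2 n n)) | IsPerfectMatching G M}) where
  toFun := fun p =>
    (⟨msetOf p.1 gBlack, msetOf_isPM hG p.2 gBlack (flip_black hG p.2)⟩,
     ⟨msetOf p.1 (fun x => ¬ gBlack x), msetOf_isPM hG p.2 (fun x => ¬ gBlack x)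
       (fun x => by have := flip_black hG p.2 x; tauto)⟩)
  invFun := fun q => ⟨permOf hG q.1.2 q.2.2, permOf_restricted hG q.1.2 q.2.2⟩
  left_inv := by
    rintro ⟨g, hg⟩
    apply Subtype.ext
    apply Equiv.ext
    intro v
    exact permFun_msetOf hG hg _ _ v
  right_inv := by
    rintro ⟨⟨M₁, h₁⟩, ⟨M₂, h₂⟩⟩
    have h := msetOf_permOf hG h₁ h₂
    exact Prod.ext (Subtype.ext h.1) (Subtype.ext h.2)

end Grid

/-- for every `n ≥ 1`, the number of `A_+`-restricted permutations of the
box `{0,…,n−1}²` equals the square of the number of perfect matchings of the `n×n`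
grid graph. -/
theorem box_restricted_permutations_eq_sq_grid_matchings
    (n : ℕ) (hn : 1 ≤ n)
    (G : SimpleGraph ↥(box2 n n))
    (hG : ∀ x y : ↥(box2 n n), G.Adj x y ↔
      |x.val.1 - y.val.1| + |x.val.2 - y.val.2| = 1) :
    Piplus n =
      (Set.ncard {M : Set (Sym2 ↥(box2 n n)) | IsPerfectMatching G M}) ^ 2 := by
  rw [Piplus, ← Nat.card_coe_set_eq, ← Nat.card_coe_set_eq,
    Nat.card_congr (gridEquiv hG), Nat.card_prod]
  ring
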